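/- Let p ∈ (0,1)^n, let γ ∈ (0,1] be a discount factor, and let x be a mixed Hider strategy with one target. Then any search σ that searches the locations in non-increasing order of the index x_i p_i/(1−γ p_i) maximizes the discounted expected payoff P_γ(x,σ) = Σ_{i=1}^n x_{σ(i)} ∏_{j=1}^i (γ p_{σ(j)}) over all searches: for every search τ, P_γ(x,τ) ≤ P_γ(x,σ). -/

import Mathlib

namespace RescueAux

variable {α : Type*}

/-- Recursive payoff of searching a list of locations in order. -/
noncomputable def F (q x : α → ℝ) : List α → ℝ
  | [] => 0
  | a :: l => q a * (x a + F q x l)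

/-- The Gittins-style index. -/
noncomputable def r (q x : α → ℝ) (a : α) : ℝ := x a * q a / (1 - q a)

lemma F_swap (q x : α → ℝ) (hq : ∀ a, 0 < q a ∧ q a < 1) (hx : ∀ a, 0 ≤ x a)
    (u v : α) (h : r q x u ≤ r q x v) (l : List α) :
    F q x (u :: v :: l) ≤ F q x (v :: u :: l) := by
  have h1u : 0 < 1 - q u := by linarith [(hq u).2]
  have h1v : 0 < 1 - q v := by linarith [(hq v).2]
  have h' : x u * q u * (1 - q v) ≤ x v * q v * (1 - q u) := by
    rw [r, r, div_le_div_iff₀ h1u h1v] at h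
    linarith
  simp only [F]
  nlinarith [h', (hq u).1, (hq v).1, hx u, hx v]

lemma F_cons_mono (q x : α → ℝ) (hq : ∀ a, 0 < q a ∧ q a < 1) (a : α) {l l' : List α}
    (h : F q x l ≤ F q x l') : F q x (a :: l) ≤ F q x (a :: l') := by
  simp only [F]
  have := (hq a).1
  nlinarith

lemma F_move (q x : α → ℝ) (hq : ∀ a, 0 < q a ∧ q a < 1) (hx : ∀ a, 0 ≤ x a)
    (b : α) (l₂ : List α) :
    ∀ l₁ : List α, (∀ a ∈ l₁, r q x a ≤ r q x b) →
      F q x (l₁ ++ b :: l₂) ≤ F q x (b :: (l₁ ++ l₂)) := by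
  intro l₁
  induction l₁ with
  | nil => intro _; simp
  | cons a l₁ ih =>
    intro h
    calc F q x ((a :: l₁) ++ b :: l₂) = F q x (a :: (l₁ ++ b :: l₂)) := rfl
      _ ≤ F q x (a :: b :: (l₁ ++ l₂)) :=
          F_cons_mono q x hq a (ih fun c hc => h c (List.mem_cons_of_mem _ hc))
      _ ≤ F q x (b :: a :: (l₁ ++ l₂)) :=
          F_swap q x hq hx a b (h a List.mem_cons_self) _
      _ = F q x (b :: ((a :: l₁) ++ l₂)) := rfl

lemma F_perm_le (q x : α → ℝ) (hq : ∀ a, 0 < q a ∧ q a < 1) (hx : ∀ a, 0 ≤ x a) :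
    ∀ (m l : List α), l.Perm m → m.Pairwise (fun a b => r q x b ≤ r q x a) →
      F q x l ≤ F q x m := by
  intro m
  induction m with
  | nil => intro l hp _; rw [List.perm_nil.mp hp]
  | cons b m' ih =>
    intro l hp hsort
    have hb : b ∈ l := hp.mem_iff.mpr List.mem_cons_self
    obtain ⟨l₁, l₂, rfl⟩ := List.append_of_mem hb
    have hp' : (b :: (l₁ ++ l₂)).Perm (b :: m') := List.perm_middle.symm.trans hp
    have hmax : ∀ a ∈ l₁ ++ l₂, r q x a ≤ r q x b := by
      intro a ha
      have ham : a ∈ b :: m' := hp'.mem_iff.mp (List.mem_cons_of_mem _ ha)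
      rcases List.mem_cons.mp ham with h | h
      · exact le_of_eq (by rw [h])
      · exact (List.pairwise_cons.mp hsort).1 a h
    calc F q x (l₁ ++ b :: l₂) ≤ F q x (b :: (l₁ ++ l₂)) :=
          F_move q x hq hx b l₂ l₁ fun a ha => hmax a (List.mem_append_left _ ha)
      _ ≤ F q x (b :: m') :=
          F_cons_mono q x hq b (ih _ hp'.cons_inv (List.pairwise_cons.mp hsort).2)

lemma F_ofFn (q x : α → ℝ) : ∀ {n : ℕ} (g : Fin n → α),
    F q x (List.ofFn g) = ∑ i : Fin n, x (g i) *
      ∏ j ∈ Finset.univ.filter (fun t : Fin n => t ≤ i), q (g j) := by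
  intro n
  induction n with
  | zero => intro g; simp [F]
  | succ n ih =>
    intro g
    have h0 : ∏ j ∈ Finset.univ.filter (fun t : Fin (n+1) => t ≤ (0 : Fin (n+1))), q (g j)
        = q (g 0) := by
      rw [Finset.prod_filter, Fin.prod_univ_succ]
      simp [Fin.le_zero_iff, Fin.succ_ne_zero]
    have hs : ∀ i : Fin n,
        (∏ j ∈ Finset.univ.filter (fun t : Fin (n+1) => t ≤ i.succ), q (g j))
        = q (g 0) * ∏ j ∈ Finset.univ.filter (fun t : Fin n => t ≤ i), q (g j.succ) := by
      intro i
      rw [Finset.prod_filter, Finset.prod_filter, Fin.prod_univ_succ]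
      simp [Fin.succ_le_succ_iff, Fin.zero_le]
    rw [List.ofFn_succ]
    show F q x (g 0 :: List.ofFn (g ∘ Fin.succ)) = _
    rw [F, ih (g ∘ Fin.succ), Fin.sum_univ_succ, h0]
    simp only [hs, Function.comp]
    rw [mul_add, Finset.mul_sum]
    congr 1
    · ring
    · exact Finset.sum_congr rfl fun i _ => by ring

end RescueAux


/-- The discounted expected payoff of the search and rescue game with discount factor `γ`:
`P_γ(x,σ) = Σ_i x_{σ(i)} ∏_{j≤i} (γ p_{σ(j)})`. -/
def rescuePGamma {n : ℕ} (γ : ℝ) (p x : Fin n → ℝ) (σ : Equiv.Perm (Fin n)) : ℝ :=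
  ∑ i : Fin n, x (σ i) * ∏ j ∈ Finset.univ.filter (fun t : Fin n => t ≤ i), (γ * p (σ j))

/-- any search in non-increasing order of the index `x_i p_i/(1−γ p_i)`
maximizes the discounted expected payoff. -/
theorem discounted_rescue_index_optimal
    {n : ℕ} (p : Fin n → ℝ) (hp : ∀ i, 0 < p i ∧ p i < 1)
    (γ : ℝ) (hγ : 0 < γ ∧ γ ≤ 1)
    (x : Fin n → ℝ) (hx : ∀ i, 0 ≤ x i) (hxsum : ∑ i, x i = 1)
    (σ : Equiv.Perm (Fin n))
    (hσ : ∀ s t : Fin n, s ≤ t →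
      x (σ t) * p (σ t) / (1 - γ * p (σ t)) ≤ x (σ s) * p (σ s) / (1 - γ * p (σ s))) :
    ∀ τ : Equiv.Perm (Fin n), rescuePGamma γ p x τ ≤ rescuePGamma γ p x σ := by
  intro τ
  set q : Fin n → ℝ := fun i => γ * p i with hqdef
  have hq : ∀ i, 0 < q i ∧ q i < 1 := by
    intro i
    constructor
    · exact mul_pos hγ.1 (hp i).1
    · calc γ * p i ≤ 1 * p i := mul_le_mul_of_nonneg_right hγ.2 (hp i).1.le
        _ = p i := one_mul _
        _ < 1 := (hp i).2
  have hr : ∀ s t : Fin n, s ≤ t → RescueAux.r q x (σ t) ≤ RescueAux.r q x (σ s) := by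
    intro s t hst
    have := mul_le_mul_of_nonneg_left (hσ s t hst) hγ.1.le
    simp only [RescueAux.r, hqdef]
    calc x (σ t) * (γ * p (σ t)) / (1 - γ * p (σ t))
        = γ * (x (σ t) * p (σ t) / (1 - γ * p (σ t))) := by ring
      _ ≤ γ * (x (σ s) * p (σ s) / (1 - γ * p (σ s))) := this
      _ = x (σ s) * (γ * p (σ s)) / (1 - γ * p (σ s)) := by ring
  have hsort : (List.ofFn σ).Pairwise (fun a b => RescueAux.r q x b ≤ RescueAux.r q x a) := by
    rw [List.pairwise_ofFn]
    intro i j hij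
    exact hr i j hij.le
  have hperm : (List.ofFn (τ : Fin n → Fin n)).Perm (List.ofFn (σ : Fin n → Fin n)) := by
    rw [List.perm_ext_iff_of_nodup (List.nodup_ofFn.mpr τ.injective)
      (List.nodup_ofFn.mpr σ.injective)]
    intro a
    simp only [List.mem_ofFn]
    constructor
    · intro _; exact ⟨σ.symm a, by simp⟩
    · intro _; exact ⟨τ.symm a, by simp⟩
  have := RescueAux.F_perm_le q x hq hx _ _ hperm hsort
  rwa [RescueAux.F_ofFn, RescueAux.F_ofFn] at this
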